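/- If m and k are positive integers, then the prefix of the Thue-Morse word of length km is a k-anti-power if and only if the prefix of length 2km is a k-anti-power when each block has length 2m (i.e., m ∈ AP(t,k) iff 2m ∈ AP(t,k)). -/

import Mathlib

open Filter

/-- The Thue-Morse word, indexed from 1: `tm i` is the parity of the number of
1's in the binary expansion of `i - 1`. -/
def tm (i : ℕ) : ℕ := (Nat.digits 2 (i - 1)).sum % 2

/-- The factor `t_a t_{a+1} ⋯ t_b` of the Thue-Morse word. -/
def seg (a b : ℕ) : List ℕ := (List.range (b + 1 - a)).map (fun j => tm (a + j))

/-- The `i`-th block of length `m` of the Thue-Morse word (blocks indexed from 0):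
`t_{im+1} ⋯ t_{(i+1)m}`. -/
def block (m i : ℕ) : List ℕ := seg (i * m + 1) ((i + 1) * m)

/-- The prefix of the Thue-Morse word of length `k * m` is a `k`-anti-power:
its `k` consecutive blocks of length `m` are pairwise distinct. -/
def IsAntiPowerPrefix (m k : ℕ) : Prop :=
  ∀ i j, i < k → j < k → i ≠ j → block m i ≠ block m j

/-- `w` is a factor (contiguous substring) of the Thue-Morse word. -/
def IsFactor (w : List ℕ) : Prop :=
  ∃ a : ℕ, w = (List.range w.length).map (fun j => tm (a + 1 + j))

/-- `δ(m) = ⌈log₂ (m/3)⌉` (a nonnegative integer for `m ≥ 2`). -/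
noncomputable def delta (m : ℕ) : ℕ := (⌈Real.logb 2 ((m : ℝ) / 3)⌉).toNat

/-- `⌈log₂ m⌉`. -/
noncomputable def ell (m : ℕ) : ℕ := (⌈Real.logb 2 (m : ℝ)⌉).toNat

/-- `K(m)`: the smallest `k` such that the prefix of the Thue-Morse word of
length `k * m` is not a `k`-anti-power. -/
noncomputable def Kap (m : ℕ) : ℕ := sInf {k | ¬ IsAntiPowerPrefix m k}

/-- `γ(k)`: the smallest odd positive integer `m` such that the prefix of the
Thue-Morse word of length `k * m` is a `k`-anti-power. -/
noncomputable def gam (k : ℕ) : ℕ := sInf {m | Odd m ∧ IsAntiPowerPrefix m k}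

/-- `Γ(k)`: the largest odd positive integer `m` such that the prefix of the
Thue-Morse word of length `k * m` is not a `k`-anti-power. -/
noncomputable def Gam (k : ℕ) : ℕ := sSup {m | Odd m ∧ ¬ IsAntiPowerPrefix m k}

/-- The Thue-Morse morphism `μ` (0 ↦ 01, 1 ↦ 10) on words. -/
def mu (w : List ℕ) : List ℕ := w.flatMap (fun a => if a = 0 then [0, 1] else [1, 0])


lemma tm_odd (n : ℕ) (hn : 0 < n) : tm (2 * n - 1) = tm n := by
  rcases Nat.lt_or_ge n 2 with h | h
  · interval_cases n <;> simp [tm]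
  · have h1 : 2 * n - 1 - 1 = 2 * (n - 1) := by omega
    have h2 : n - 1 ≠ 0 := by omega
    unfold tm
    rw [h1, Nat.digits_def' (by norm_num : 1 < 2) (by omega : 0 < 2 * (n-1))]
    simp [Nat.mul_mod_right, Nat.mul_div_cancel_left _ (by norm_num : 0 < 2)]

lemma tm_even (n : ℕ) (hn : 0 < n) : tm (2 * n) = (tm n + 1) % 2 := by
  have h1 : 2 * n - 1 = 2 * (n - 1) + 1 := by omega
  unfold tm
  rw [h1, Nat.digits_def' (by norm_num : 1 < 2) (by omega : 0 < 2 * (n-1) + 1)]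
  have : (2 * (n - 1) + 1) % 2 = 1 := by omega
  have h2 : (2 * (n - 1) + 1) / 2 = n - 1 := by omega
  rw [this, h2]
  simp [Nat.add_mod, Nat.add_comm]

lemma block_eq (m i : ℕ) : block m i = (List.range m).map (fun q => tm (i * m + 1 + q)) := by
  unfold block seg
  have : (i + 1) * m + 1 - (i * m + 1) = m := by
    have : (i + 1) * m = i * m + m := by ring
    omega
  rw [this]

lemma block_eq_iff' (m i j : ℕ) :
    block m i = block m j ↔ ∀ q < m, tm (i * m + 1 + q) = tm (j * m + 1 + q) := by
  rw [block_eq, block_eq, List.map_eq_map_iff]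
  simp [List.mem_range]

lemma block_two_eq_iff (m i j : ℕ) :
    block (2 * m) i = block (2 * m) j ↔ block m i = block m j := by
  rw [block_eq_iff', block_eq_iff']
  constructor
  · intro h q hq
    have h2 : 2 * q < 2 * m := by omega
    have := h (2 * q) h2
    have e1 : i * (2 * m) + 1 + 2 * q = 2 * (i * m + 1 + q) - 1 := by ring_nf; omega
    have e2 : j * (2 * m) + 1 + 2 * q = 2 * (j * m + 1 + q) - 1 := by ring_nf; omega
    rw [e1, e2, tm_odd _ (by omega), tm_odd _ (by omega)] at this
    exact this
  · intro h q hq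
    rcases Nat.even_or_odd q with ⟨a, ha⟩ | ⟨a, ha⟩
    · have ha' : q = 2 * a := by omega
      have : a < m := by omega
      have e1 : i * (2 * m) + 1 + q = 2 * (i * m + 1 + a) - 1 := by ring_nf; omega
      have e2 : j * (2 * m) + 1 + q = 2 * (j * m + 1 + a) - 1 := by ring_nf; omega
      rw [e1, e2, tm_odd _ (by omega), tm_odd _ (by omega)]
      exact h a this
    · have : a < m := by omega
      have e1 : i * (2 * m) + 1 + q = 2 * (i * m + 1 + a) := by ring_nf; omega
      have e2 : j * (2 * m) + 1 + q = 2 * (j * m + 1 + a) := by ring_nf; omega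
      rw [e1, e2, tm_even _ (by omega), tm_even _ (by omega), h a this]

theorem stmt7 (m k : ℕ) (hm : 0 < m) (hk : 0 < k) :
    IsAntiPowerPrefix m k ↔ IsAntiPowerPrefix (2 * m) k := by
  unfold IsAntiPowerPrefix
  constructor
  · intro h i j hi hj hij hb
    exact h i j hi hj hij ((block_two_eq_iff m i j).mp hb)
  · intro h i j hi hj hij hb
    exact h i j hi hj hij ((block_two_eq_iff m i j).mpr hb)
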